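/- Let Σ be a type and let A, B ⊆ Σ be disjoint sets of letters. Let m, k ≥ 1, let L_1, …, L_m be languages over Σ each consisting only of words all of whose letters lie in A, and let M_1, …, M_k be languages over Σ each consisting only of words all of whose letters lie in B. Set L = ∩_{i=1}^m L_i and M = ∩_{j=1}^k M_j. Then the concatenation satisfies L·M = ∩_{i=1}^m ∩_{j=1}^k (L_i · M_j). -/
import Mathlib


/-- The intersection of a family of languages, as a language. -/
def interLang {σ : Type} {ι : Sort*} (L : ι → Language σ) : Language σ := ⋂ i, L i

private lemma mem_interLang {σ : Type} {ι : Sort*} {L : ι → Language σ} {x : List σ} :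
    x ∈ interLang L ↔ ∀ i, x ∈ L i := Set.mem_iInter

private lemma split_le {σ : Type} {A B : Set σ} (hAB : Disjoint A B)
    {u v u' v' : List σ} (h : u ++ v = u' ++ v')
    (hu : ∀ a ∈ u, a ∈ A) (hv : ∀ a ∈ v, a ∈ B)
    (hu' : ∀ a ∈ u', a ∈ A) (hv' : ∀ a ∈ v', a ∈ B)
    (hlen : u.length ≤ u'.length) : u = u' ∧ v = v' := by
  have hpre : u <+: u' := by
    have : u <+: u' ++ v' := h ▸ List.prefix_append u v
    exact List.prefix_of_prefix_length_le this (List.prefix_append u' v') hlen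
  obtain ⟨t, rfl⟩ := hpre
  have hv2 : v = t ++ v' := by
    rw [List.append_assoc] at h
    exact List.append_cancel_left h
  have ht : t = [] := by
    rcases t with _ | ⟨a, t⟩
    · rfl
    · exact absurd (hv a (by simp [hv2])) ((Set.disjoint_left.mp hAB) (hu' a (by simp)))
  subst ht
  simp [hv2]

private lemma split_unique {σ : Type} {A B : Set σ} (hAB : Disjoint A B)
    {u v u' v' : List σ} (h : u ++ v = u' ++ v')
    (hu : ∀ a ∈ u, a ∈ A) (hv : ∀ a ∈ v, a ∈ B)
    (hu' : ∀ a ∈ u', a ∈ A) (hv' : ∀ a ∈ v', a ∈ B) : u = u' ∧ v = v' := by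
  rcases le_total u.length u'.length with hl | hl
  · exact split_le hAB h hu hv hu' hv' hl
  · obtain ⟨h1, h2⟩ := split_le hAB h.symm hu' hv' hu hv hl
    exact ⟨h1.symm, h2.symm⟩

/-- If the languages `L_1, …, L_m` use only letters from `A` and the languages
`M_1, …, M_k` use only letters from `B`, where `A` and `B` are disjoint, then
`(⋂ᵢ Lᵢ) · (⋂ⱼ Mⱼ) = ⋂ᵢ ⋂ⱼ (Lᵢ · Mⱼ)`. -/
theorem inter_concat {σ : Type} (A B : Set σ) (hAB : Disjoint A B)
    (m k : ℕ) (hm : 1 ≤ m) (hk : 1 ≤ k)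
    (L : Fin m → Language σ) (M : Fin k → Language σ)
    (hL : ∀ i, ∀ w ∈ L i, ∀ a ∈ w, a ∈ A)
    (hM : ∀ j, ∀ w ∈ M j, ∀ a ∈ w, a ∈ B) :
    interLang L * interLang M = interLang fun i => interLang fun j => L i * M j := by
  ext x
  simp only [mem_interLang]
  constructor
  · rintro hx i j
    rw [Language.mem_mul] at hx
    obtain ⟨u, hu, v, hv, rfl⟩ := hx
    rw [mem_interLang] at hu hv
    exact Language.append_mem_mul (hu i) (hv j)
  · intro hx
    have i0 : Fin m := ⟨0, hm⟩
    have j0 : Fin k := ⟨0, hk⟩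
    obtain ⟨u, hu, v, hv, hx0⟩ := Language.mem_mul.mp (hx i0 j0)
    rw [Language.mem_mul]
    refine ⟨u, mem_interLang.mpr fun i => ?_, v, mem_interLang.mpr fun j => ?_, hx0⟩
    · obtain ⟨u', hu', v', hv', hx'⟩ := Language.mem_mul.mp (hx i j0)
      obtain ⟨h1, _⟩ := split_unique hAB (hx0.trans hx'.symm)
        (hL i0 u hu) (hM j0 v hv) (hL i u' hu') (hM j0 v' hv')
      exact h1 ▸ hu'
    · obtain ⟨u', hu', v', hv', hx'⟩ := Language.mem_mul.mp (hx i0 j)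
      obtain ⟨_, h2⟩ := split_unique hAB (hx0.trans hx'.symm)
        (hL i0 u hu) (hM j0 v hv) (hL i0 u' hu') (hM j v' hv')
      exact h2 ▸ hv'
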